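/- arXiv:1009.3160 — 2 statements merged into one kernel-verified Lean document; each statement's English description precedes it below -/
import Mathlib

section
/- Let G be a group, S a subgroup of G, and C a subgroup with C ≤ C_G(S). Assume N_{C_G(S)}(C) = C, and that for every g ∈ N_G(S) there exists h ∈ C_G(S) with (C^g)^h = C. Then N_G(S) = C_G(S)·N_{N_G(S)}(C), and there is an injective group homomorphism from N_G(S)/C_G(S) into N_G(C)/C. If moreover N_G(C) ≤ N_G(S), then this gives a group isomorphism N_G(S)/C_G(S) ≅ N_G(C)/C. -/
open Pointwise

/-- The conjugate `H^g = g⁻¹ * H * g` of a subgroup `H` by an element `g`. -/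
def conjSub {G : Type*} [Group G] (H : Subgroup G) (g : G) : Subgroup G :=
  H.map (MulAut.conj g⁻¹).toMonoidHom

/-- The centralizer `C_G(S)` is a normal subgroup of the normalizer `N_G(S)`. -/
instance centralizer_subgroupOf_normalizer_normal {G : Type*} [Group G] (S : Subgroup G) :
    ((Subgroup.centralizer (S : Set G)).subgroupOf (Subgroup.normalizer (S : Set G))).Normal := by
  rw [← Subgroup.normalizerMonoidHom_ker]
  exact MonoidHom.normal_ker _

lemma mem_conjSub {G : Type*} [Group G] {H : Subgroup G} {g x : G} :
    x ∈ conjSub H g ↔ g * x * g⁻¹ ∈ H := by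
  simp only [conjSub, Subgroup.mem_map, MulEquiv.coe_toMonoidHom, MulAut.conj_apply]
  constructor
  · rintro ⟨y, hy, rfl⟩; group; simpa using hy
  · intro h; exact ⟨_, h, by group⟩

lemma conjSub_conjSub {G : Type*} [Group G] (H : Subgroup G) (g h : G) :
    conjSub (conjSub H g) h = conjSub H (g * h) := by
  ext x; simp only [mem_conjSub]; group

lemma conjSub_eq_self_iff {G : Type*} [Group G] {H : Subgroup G} {g : G} :
    conjSub H g = H ↔ g ∈ (Subgroup.normalizer (H : Set G)) := by
  rw [Subgroup.mem_normalizer_iff, SetLike.ext_iff]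
  constructor
  · intro h x; rw [← h x, mem_conjSub]
  · intro h x; rw [mem_conjSub, ← h x]

lemma centralizer_le_normalizer' {G : Type*} [Group G] (S : Subgroup G) :
    Subgroup.centralizer (S : Set G) ≤ (Subgroup.normalizer (S : Set G)) := by
  intro z hz
  rw [Subgroup.mem_centralizer_iff] at hz
  rw [Subgroup.mem_normalizer_iff]
  intro x
  constructor
  · intro hx
    rw [show z * x = x * z from (hz x hx).symm, mul_assoc, mul_inv_cancel, mul_one]
    exact hx
  · intro hx
    have h2 : z * x = z * (z * x * z⁻¹) := by rw [← hz _ hx]; group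
    rw [mul_left_cancel h2]; exact hx

/-- Let `G` be a group, `S` a subgroup of `G`, and `C` a subgroup with `C ≤ C_G(S)`.
Assume `N_{C_G(S)}(C) = C`, and that every `N_G(S)`-conjugate of `C` is
`C_G(S)`-conjugate to `C`.  Then `N_G(S) = C_G(S)·N_{N_G(S)}(C)`, and there is an
injective group homomorphism from `N_G(S)/C_G(S)` into `N_G(C)/C`.  If moreover
`N_G(C) ≤ N_G(S)`, then this gives an isomorphism `N_G(S)/C_G(S) ≅ N_G(C)/C`. -/
theorem weyl_embedding_from_torus {G : Type*} [Group G] (S C : Subgroup G)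
    (hCcent : C ≤ Subgroup.centralizer (S : Set G))
    (h1 : (Subgroup.normalizer (C : Set G)) ⊓ Subgroup.centralizer (S : Set G) = C)
    (hconj : ∀ g ∈ (Subgroup.normalizer (S : Set G)), ∃ h ∈ Subgroup.centralizer (S : Set G),
        conjSub (conjSub C g) h = C) :
    ((Subgroup.normalizer (S : Set G)) : Set G) = (Subgroup.centralizer (S : Set G) : Set G) *
        (((Subgroup.normalizer (C : Set G)) ⊓ (Subgroup.normalizer (S : Set G)) : Subgroup G) : Set G) ∧
      (∃ f : (↥(Subgroup.normalizer (S : Set G)) ⧸ (Subgroup.centralizer (S : Set G)).subgroupOf (Subgroup.normalizer (S : Set G))) →*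
          (↥(Subgroup.normalizer (C : Set G)) ⧸ C.subgroupOf (Subgroup.normalizer (C : Set G))), Function.Injective f) ∧
      ((Subgroup.normalizer (C : Set G)) ≤ (Subgroup.normalizer (S : Set G)) →
        Nonempty ((↥(Subgroup.normalizer (S : Set G)) ⧸
            (Subgroup.centralizer (S : Set G)).subgroupOf (Subgroup.normalizer (S : Set G))) ≃*
          (↥(Subgroup.normalizer (C : Set G)) ⧸ C.subgroupOf (Subgroup.normalizer (C : Set G))))) := by
  set Z := Subgroup.centralizer (S : Set G) with hZ
  set N := (Subgroup.normalizer (S : Set G)) with hN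
  set M := (Subgroup.normalizer (C : Set G)) ⊓ N with hM
  have hZN : Z ≤ N := centralizer_le_normalizer' S
  -- Frattini decomposition: for g ∈ N, there is m ∈ M with g * (something in Z) ...
  have key : ∀ g ∈ N, ∃ z ∈ Z, ∃ m ∈ M, g = z * m := by
    intro g hg
    obtain ⟨h, hh, hC⟩ := hconj g hg
    rw [conjSub_conjSub, conjSub_eq_self_iff] at hC
    have hmN : g * h ∈ N := N.mul_mem hg (hZN hh)
    have hmM : g * h ∈ M := ⟨hC, hmN⟩
    -- g = (g*h*h⁻¹*(g*h)⁻¹) * (g*h)  with first factor in Z (Z normal in N)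
    have hzZ : (g * h) * h⁻¹ * (g * h)⁻¹ ∈ Z := by
      rw [Subgroup.mem_centralizer_iff]
      intro x hx
      have hinv : (g*h)⁻¹ * x * (g*h) ∈ S := by
        have := ((Subgroup.mem_normalizer_iff.mp (N.inv_mem hmN)) x).mp hx
        simpa [mul_assoc] using this
      have hcomm := Subgroup.mem_centralizer_iff.mp (Z.inv_mem hh) _ hinv
      -- hcomm : ((g*h)⁻¹ * x * (g*h)) * h⁻¹ = h⁻¹ * ((g*h)⁻¹ * x * (g*h))
      have : x * (g * h * h⁻¹ * (g * h)⁻¹) = g * h * (((g*h)⁻¹ * x * (g*h)) * h⁻¹) * (g*h)⁻¹ := by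
        group
      rw [this, hcomm]; group
    refine ⟨_, hzZ, _, hmM, by group⟩
  have part1 : (N : Set G) = (Z : Set G) * ((M : Subgroup G) : Set G) := by
    ext g
    constructor
    · intro hg
      obtain ⟨z, hz, m, hm, rfl⟩ := key g hg
      exact Set.mul_mem_mul hz hm
    · rintro ⟨z, hz, m, hm, rfl⟩
      exact N.mul_mem (hZN hz) hm.2
  -- the homomorphisms
  have hMN : M ≤ N := inf_le_right
  have hMC : M ≤ (Subgroup.normalizer (C : Set G)) := inf_le_left
  set ψ : M →* (N ⧸ Z.subgroupOf N) :=
    (QuotientGroup.mk' (Z.subgroupOf N)).comp (Subgroup.inclusion hMN) with hψ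
  set χ : M →* ((Subgroup.normalizer (C : Set G)) ⧸ C.subgroupOf (Subgroup.normalizer (C : Set G))) :=
    (QuotientGroup.mk' (C.subgroupOf (Subgroup.normalizer (C : Set G)))).comp (Subgroup.inclusion hMC) with hχ
  have hkerψ : ∀ m : M, ψ m = 1 ↔ (m : G) ∈ C := by
    intro m
    rw [hψ]
    simp only [MonoidHom.comp_apply, QuotientGroup.mk'_apply, QuotientGroup.eq_one_iff]
    rw [Subgroup.mem_subgroupOf, Subgroup.coe_inclusion]
    constructor
    · intro hm
      rw [← h1]
      exact ⟨hMC m.2, hm⟩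
    · intro hm; exact hCcent hm
  have hkerχ : ∀ m : M, χ m = 1 ↔ (m : G) ∈ C := by
    intro m
    rw [hχ]
    simp only [MonoidHom.comp_apply, QuotientGroup.mk'_apply, QuotientGroup.eq_one_iff]
    rw [Subgroup.mem_subgroupOf, Subgroup.coe_inclusion]
  have hψsurj : Function.Surjective ψ := by
    rintro x
    obtain ⟨⟨g, hg⟩, rfl⟩ := QuotientGroup.mk'_surjective (Z.subgroupOf N) x
    obtain ⟨z, hz, m, hm, hgzm⟩ := key g hg
    refine ⟨⟨m, hm⟩, ?_⟩
    rw [hψ]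
    simp only [MonoidHom.comp_apply, QuotientGroup.mk'_apply]
    rw [QuotientGroup.eq]
    rw [Subgroup.mem_subgroupOf]
    show m⁻¹ * g ∈ Z
    rw [hgzm]
    have : m⁻¹ * (z * m) = m⁻¹ * z * m := by group
    rw [this]
    -- m⁻¹ z m ∈ Z since Z normal in N and m ∈ N
    rw [Subgroup.mem_centralizer_iff]
    intro x hx
    have hmN' : m ∈ N := hMN hm
    have hxm : m * x * m⁻¹ ∈ S := ((Subgroup.mem_normalizer_iff.mp hmN') x).mp hx
    have hcomm := Subgroup.mem_centralizer_iff.mp hz _ hxm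
    have : x * (m⁻¹ * z * m) = m⁻¹ * ((m * x * m⁻¹) * z) * m := by group
    rw [this, hcomm]; group
  have hle : ψ.ker ≤ χ.ker := by
    intro m hm
    rw [MonoidHom.mem_ker] at hm ⊢
    rw [hkerχ]; rw [hkerψ] at hm; exact hm
  set f₀ := QuotientGroup.lift ψ.ker χ hle with hf₀
  have hf₀inj : Function.Injective f₀ := by
    intro a b
    refine QuotientGroup.induction_on a fun x => QuotientGroup.induction_on b fun y h => ?_
    rw [QuotientGroup.eq]
    have : χ (x⁻¹ * y) = 1 := by
      rw [map_mul, map_inv]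
      rw [hf₀] at h
      simp only [QuotientGroup.lift_mk] at h
      rw [h]; group
    rw [MonoidHom.mem_ker, hkerψ]
    rw [hkerχ] at this
    exact this
  set e := QuotientGroup.quotientKerEquivOfSurjective ψ hψsurj with he
  set f := f₀.comp (e.symm : (N ⧸ Z.subgroupOf N) ≃* M ⧸ ψ.ker).toMonoidHom with hf
  have hfinj : Function.Injective f := hf₀inj.comp e.symm.injective
  refine ⟨part1, ⟨f, hfinj⟩, ?_⟩
  intro hNC
  have hχsurj : Function.Surjective χ := by
    rintro x
    obtain ⟨n, rfl⟩ := QuotientGroup.mk'_surjective (C.subgroupOf (Subgroup.normalizer (C : Set G))) x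
    refine ⟨⟨n, n.2, hNC n.2⟩, ?_⟩
    rw [hχ]
    rfl
  have hf₀surj : Function.Surjective f₀ := by
    rintro x
    obtain ⟨m, rfl⟩ := hχsurj x
    exact ⟨QuotientGroup.mk m, by rw [hf₀]; simp⟩
  have : Function.Surjective f := hf₀surj.comp e.symm.surjective
  exact ⟨MulEquiv.ofBijective f ⟨hfinj, this⟩⟩
end

section
/- Let G be a group, B a subgroup of G, and C a subgroup of B which is self-normalizing in G (N_G(C) = C). Assume that for every g ∈ G with C ≤ B^g there exists u ∈ B^g such that C^{gu} = C. Then for every g ∈ G, C ≤ B^g implies g ∈ B. Consequently B is the unique G-conjugate of B containing C, and C^g ≠ C for every g ∈ G ∖ N_G(B). -/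
open Pointwise

lemma conjSub_eq_iff {G : Type*} [Group G] {H : Subgroup G} {g : G} :
    conjSub H g = H ↔ g ∈ Subgroup.normalizer (H : Set G) := by
  simp only [SetLike.ext_iff, mem_conjSub, Subgroup.mem_normalizer_iff]
  exact ⟨fun h x => (h x).symm, fun h x => (h x).symm⟩

/-- Let `G` be a group, `B` a subgroup of `G`, and `C` a subgroup of `B` which is
self-normalizing in `G` (`N_G(C) = C`).  Assume that for every `g ∈ G` with `C ≤ B^g`
there exists `u ∈ B^g` such that `C^{gu} = C`.  Then for every `g ∈ G`, `C ≤ B^g`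
implies `g ∈ B`.  Consequently `B` is the unique `G`-conjugate of `B` containing `C`,
and `C^g ≠ C` for every `g ∈ G ∖ N_G(B)`. -/
theorem unique_conjugate_containing_selfnormalizing {G : Type*} [Group G]
    (B C : Subgroup G) (hCB : C ≤ B)
    (hself : Subgroup.normalizer (C : Set G) = C)
    (hconj : ∀ g : G, C ≤ conjSub B g → ∃ u ∈ conjSub B g, conjSub C (g * u) = C) :
    (∀ g : G, C ≤ conjSub B g → g ∈ B) ∧
      (∀ g : G, C ≤ conjSub B g → conjSub B g = B) ∧
      (∀ g : G, g ∉ Subgroup.normalizer (B : Set G) → conjSub C g ≠ C) := by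
  have key : ∀ g : G, C ≤ conjSub B g → g ∈ B := by
    intro g hg
    obtain ⟨u, hu, hgu⟩ := hconj g hg
    have hguC : g * u ∈ C := by
      rw [← hself]
      exact conjSub_eq_iff.mp hgu
    have hguB : g * u ∈ B := hCB hguC
    have h1 : g * u * g⁻¹ ∈ B := mem_conjSub.mp hu
    have : g = (g * u * g⁻¹)⁻¹ * (g * u) := by group
    rw [this]
    exact B.mul_mem (B.inv_mem h1) hguB
  refine ⟨key, ?_, ?_⟩
  · intro g hg
    have hgB : g ∈ B := key g hg
    exact conjSub_eq_iff.mpr (Subgroup.le_normalizer hgB)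
  · intro g hg hC
    have : g ∈ C := by rw [← hself]; exact conjSub_eq_iff.mp hC
    exact hg (Subgroup.le_normalizer (hCB this))
end
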